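/- Let fᵢ be L-smooth and μ-strongly convex, x̃ = z − τγ∇fᵢ(z), and xᵢ* = x* − τγ∇fᵢ(x*). Then ‖x̃ − xᵢ*‖² ≤ (1 − τγμ)‖z − x*‖² − 2γτ(1 − τγL)(fᵢ(z) − fᵢ(x*) − ⟨∇fᵢ(x*), z − x*⟩). -/

import Mathlib

open scoped RealInnerProductSpace
set_option maxHeartbeats 1000000 in

/-- If `fᵢ` is `L`-smooth and `μ`-strongly convex, `x̃ = z − τγ∇fᵢ(z)` and
`xᵢ* = x* − τγ∇fᵢ(x*)`, then
`‖x̃ − xᵢ*‖² ≤ (1 − τγμ)‖z − x*‖² − 2γτ(1 − τγL)(fᵢ(z) − fᵢ(x*) − ⟨∇fᵢ(x*), z − x*⟩)`. -/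
theorem stmt8 {d : ℕ} (L μ γ τ : ℝ) (hL : 0 < L) (hμ : 0 < μ) (hγ : 0 < γ) (hτ : 0 < τ)
    (f : EuclideanSpace ℝ (Fin d) → ℝ)
    (G : EuclideanSpace ℝ (Fin d) → EuclideanSpace ℝ (Fin d))
    (hsmooth : ∀ x y : EuclideanSpace ℝ (Fin d),
      f x ≤ f y + ⟪G y, x - y⟫ + L / 2 * ‖x - y‖ ^ 2)
    (hsc : ∀ x y : EuclideanSpace ℝ (Fin d),
      f x ≥ f y + ⟪G y, x - y⟫ + μ / 2 * ‖x - y‖ ^ 2)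
    (z xstar : EuclideanSpace ℝ (Fin d)) :
    ‖(z - (τ * γ) • G z) - (xstar - (τ * γ) • G xstar)‖ ^ 2
      ≤ (1 - τ * γ * μ) * ‖z - xstar‖ ^ 2
        - 2 * γ * τ * (1 - τ * γ * L) * (f z - f xstar - ⟪G xstar, z - xstar⟫) := by
  set g : EuclideanSpace ℝ (Fin d) := G z - G xstar with hg
  have hLHS : (z - (τ * γ) • G z) - (xstar - (τ * γ) • G xstar)
      = (z - xstar) - (τ * γ) • g := by
    rw [hg, smul_sub]; abel
  rw [hLHS]
  have hexp : ‖(z - xstar) - (τ * γ) • g‖ ^ 2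
      = ‖z - xstar‖ ^ 2 - 2 * (τ * γ) * ⟪g, z - xstar⟫ + (τ * γ)^2 * ‖g‖ ^ 2 := by
    rw [norm_sub_sq_real, norm_smul, real_inner_smul_right, real_inner_comm]
    simp [norm_smul, mul_pow]
    ring
  rw [hexp]
  have hgw : ⟪g, z - xstar⟫ = ⟪G z, z - xstar⟫ - ⟪G xstar, z - xstar⟫ := by
    rw [hg, inner_sub_left]
  have hgg : ‖g‖ ^ 2 = ⟪G z, g⟫ - ⟪G xstar, g⟫ := by
    rw [← real_inner_self_eq_norm_sq, hg, inner_sub_left]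
  -- strong convexity facts
  have hsc1 := hsc z xstar
  have hsc2 := hsc xstar z
  rw [show xstar - z = -(z - xstar) by abel, inner_neg_right, norm_neg] at hsc2
  -- smoothness / cocoercivity
  have hsm := hsmooth (z - (L⁻¹) • g) z
  have hcvx := hsc (z - (L⁻¹) • g) xstar
  rw [show (z - (L⁻¹) • g) - z = -((L⁻¹) • g) by abel, inner_neg_right,
    real_inner_smul_right, norm_neg, norm_smul] at hsm
  rw [show (z - (L⁻¹) • g) - xstar = (z - xstar) - (L⁻¹) • g by abel,
    inner_sub_right, real_inner_smul_right] at hcvx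
  have hμ4 : μ / 2 * ‖(z - (L⁻¹) • g) - xstar‖ ^ 2 ≥ 0 := by positivity
  have hcvx' : f (z - (L⁻¹) • g) ≥ f xstar + (⟪G xstar, z - xstar⟫ - L⁻¹ * ⟪G xstar, g⟫) := by
    nlinarith [hcvx]
  have hnormLg : (‖(L⁻¹ : ℝ)‖ * ‖g‖) ^ 2 = L⁻¹ ^ 2 * ‖g‖ ^ 2 := by
    rw [mul_pow, Real.norm_eq_abs, sq_abs]
  rw [hnormLg] at hsm
  have hc : L / 2 * (L⁻¹ ^ 2 * ‖g‖ ^ 2) = L⁻¹ / 2 * ‖g‖ ^ 2 := by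
    field_simp
  rw [hc] at hsm
  have key : L⁻¹ / 2 * ‖g‖ ^ 2 ≤ f z - f xstar - ⟪G xstar, z - xstar⟫ := by
    rw [hgg] at hsm ⊢
    linarith [hsm, hcvx']
  have h2L : 2 * L * (L⁻¹ / 2 * ‖g‖ ^ 2) = ‖g‖ ^ 2 := by
    field_simp
  have hgg2 : ‖g‖ ^ 2 ≤ 2 * L * (f z - f xstar - ⟪G xstar, z - xstar⟫) := by
    have := mul_le_mul_of_nonneg_left key (by positivity : (0:ℝ) ≤ 2 * L)
    linarith [this, h2L.le, h2L.ge]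
  have hmw : (f z - f xstar - ⟪G xstar, z - xstar⟫) + μ / 2 * ‖z - xstar‖ ^ 2
      ≤ ⟪g, z - xstar⟫ := by
    rw [hgw]; linarith [hsc1, hsc2]
  have h1 := mul_le_mul_of_nonneg_left hmw (by positivity : (0:ℝ) ≤ 2 * (τ * γ))
  have h2 := mul_le_mul_of_nonneg_left hgg2 (by positivity : (0:ℝ) ≤ (τ * γ) ^ 2)
  linarith [h1, h2]
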